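/- Let {a_i}_{i=1}^{n−1} be a positive geometric progression with ratio c ∈ (0, 1) (a_{i+1} = c·a_i), where n ∈ ℕ with n ≥ 3, and let m, m' be integers with 1 ≤ m < m' ≤ n−1 and t < 1 with a_{m'}/a_m ≤ t (equivalently c^{m'−m} ≤ t). Then (Σ_{i=m'}^{n−1} a_i) / (Σ_{i=m}^{m'−1} a_i) ≤ (t/(1−t))·( 1 − t^{(n−m')/(m'−m)} ). -/

import Mathlib

open Finset

private lemma young_aux (r : ℝ) (hr : 0 < r) (x : ℝ) (hx0 : 0 < x) :
    (r + 1) * x ^ r ≤ 1 + r * x ^ (r + 1) := by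
  have hr1 : (0:ℝ) < r + 1 := by linarith
  have h := Real.geom_mean_le_arith_mean2_weighted
    (w₁ := 1 / (r + 1)) (w₂ := r / (r + 1)) (p₁ := 1) (p₂ := x ^ (r + 1))
    (by positivity) (by positivity) zero_le_one
    (Real.rpow_nonneg hx0.le _) (by field_simp; ring)
  have hp : (x ^ (r + 1)) ^ (r / (r + 1)) = x ^ r := by
    rw [← Real.rpow_mul hx0.le]
    congr 1
    field_simp
  rw [hp, Real.one_rpow, one_mul, mul_one] at h
  have := mul_le_mul_of_nonneg_left h hr1.le
  calc (r + 1) * x ^ r ≤ (r + 1) * (1 / (r + 1) + r / (r + 1) * x ^ (r + 1)) := this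
    _ = 1 + r * x ^ (r + 1) := by field_simp

private lemma mono_f (r : ℝ) (hr : 0 < r) (u t : ℝ) (hu : 0 < u) (hut : u ≤ t)
    (ht : t < 1) :
    u * (1 - u ^ r) / (1 - u) ≤ t * (1 - t ^ r) / (1 - t) := by
  set F : ℝ → ℝ := fun x => (x - x ^ (r + 1)) / (1 - x) with hFdef
  have hF : ∀ x : ℝ, 0 < x → x < 1 → x * (1 - x ^ r) / (1 - x) = F x := by
    intro x hx0 hx1
    simp only [hFdef]
    rw [Real.rpow_add hx0, Real.rpow_one]
    ring
  have hd : ∀ x : ℝ, 0 < x → x < 1 →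
      HasDerivAt F (((1 - (r + 1) * x ^ r) * (1 - x) - (x - x ^ (r + 1)) * (-1)) / (1 - x) ^ 2) x := by
    intro x hx0 hx1
    have h1 : HasDerivAt (fun y : ℝ => y ^ (r + 1)) ((r + 1) * x ^ (r + 1 - 1)) x :=
      Real.hasDerivAt_rpow_const (Or.inl hx0.ne')
    rw [add_sub_cancel_right] at h1
    have h2 : HasDerivAt (fun y : ℝ => y - y ^ (r + 1)) (1 - (r + 1) * x ^ r) x :=
      (hasDerivAt_id x).sub h1
    have h3 : HasDerivAt (fun y : ℝ => 1 - y) (-1) x := by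
      exact ((hasDerivAt_const x (1:ℝ)).sub (hasDerivAt_id x)).congr_deriv (by norm_num)
    have hden : (1 : ℝ) - x ≠ 0 := by linarith
    exact h2.div h3 hden
  have ht0 : 0 < t := lt_of_lt_of_le hu hut
  have hmono : MonotoneOn F (Set.Icc u t) := by
    apply monotoneOn_of_deriv_nonneg (convex_Icc u t)
    · intro x hx
      exact (hd x (lt_of_lt_of_le hu hx.1)
        (lt_of_le_of_lt hx.2 ht)).continuousAt.continuousWithinAt
    · intro x hx
      rw [interior_Icc] at hx
      exact ((hd x (lt_trans hu hx.1) (lt_trans hx.2 ht)).differentiableAt).differentiableWithinAt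
    · intro x hx
      rw [interior_Icc] at hx
      have hx0 : 0 < x := lt_trans hu hx.1
      have hx1 : x < 1 := lt_trans hx.2 ht
      rw [(hd x hx0 hx1).deriv]
      have hy := young_aux r hr x hx0
      have hx1' : x ^ (r + 1) = x ^ r * x := by
        rw [Real.rpow_add hx0, Real.rpow_one]
      have hsq : (0:ℝ) < (1 - x) ^ 2 := pow_pos (by linarith) 2
      apply div_nonneg _ hsq.le
      rw [hx1']
      nlinarith [hy]
  have := hmono (Set.left_mem_Icc.2 hut) (Set.right_mem_Icc.2 hut) hut
  rw [hF u hu (lt_of_le_of_lt hut ht), hF t ht0 ht]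
  exact this

theorem stmt10 (n : ℕ) (hn : 3 ≤ n) (a : ℕ → ℝ) (c : ℝ) (hc0 : 0 < c) (hc1 : c < 1)
    (hpos : ∀ i, 1 ≤ i → i ≤ n - 1 → 0 < a i)
    (hgeo : ∀ i, 1 ≤ i → i + 1 ≤ n - 1 → a (i + 1) = c * a i)
    (m m' : ℕ) (hm : 1 ≤ m) (hmm' : m < m') (hm'n : m' ≤ n - 1)
    (t : ℝ) (ht : t < 1) (hratio : a m' / a m ≤ t) :
    (∑ i ∈ Finset.Ico m' n, a i) / (∑ i ∈ Finset.Ico m m', a i)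
      ≤ t / (1 - t) * (1 - t ^ (((n : ℝ) - m') / ((m' : ℝ) - m))) := by
  set d := m' - m with hddef
  set k := n - m' with hkdef
  have hd1 : 1 ≤ d := by omega
  have hk1 : 1 ≤ k := by omega
  have hform : ∀ j, m + j ≤ n - 1 → a (m + j) = c ^ j * a m := by
    intro j
    induction j with
    | zero => simp
    | succ j ih =>
      intro hj
      have h1 : m + j ≤ n - 1 := by omega
      have h2 : m + (j + 1) = (m + j) + 1 := by omega
      rw [h2, hgeo (m + j) (by omega) (by omega), ih h1, pow_succ]
      ring
  have ham : 0 < a m := hpos m hm (by omega)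
  have htop : ∑ i ∈ Finset.Ico m' n, a i = a m * (c ^ d * ∑ i ∈ Finset.range k, c ^ i) := by
    rw [Finset.sum_Ico_eq_sum_range]
    have hnk : n - m' = k := rfl
    rw [hnk, Finset.mul_sum, Finset.mul_sum]
    apply Finset.sum_congr rfl
    intro i hi
    rw [Finset.mem_range] at hi
    have h3 : m' + i = m + (d + i) := by omega
    rw [h3, hform (d + i) (by omega), pow_add]
    ring
  have hbot : ∑ i ∈ Finset.Ico m m', a i = a m * ∑ i ∈ Finset.range d, c ^ i := by
    rw [Finset.sum_Ico_eq_sum_range]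
    have hmd : m' - m = d := rfl
    rw [hmd, Finset.mul_sum]
    apply Finset.sum_congr rfl
    intro i hi
    rw [Finset.mem_range] at hi
    rw [hform i (by omega)]
    ring
  set u := c ^ d with hudef
  have hu0 : 0 < u := pow_pos hc0 d
  have hu1 : u < 1 := pow_lt_one₀ hc0.le hc1 (by omega)
  have hck1 : c ^ k < 1 := pow_lt_one₀ hc0.le hc1 (by omega)
  have hck0 : 0 < c ^ k := pow_pos hc0 k
  have ham' : a m' = u * a m := by
    have h4 : m' = m + d := by omega
    rw [h4, hform d (by omega)]
  have hut : u ≤ t := by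
    rw [ham', mul_div_assoc, div_self ham.ne', mul_one] at hratio
    exact hratio
  have ht0 : 0 < t := lt_of_lt_of_le hu0 hut
  have hc1' : c ≠ 1 := ne_of_lt hc1
  have hLHS : (∑ i ∈ Finset.Ico m' n, a i) / (∑ i ∈ Finset.Ico m m', a i)
      = u * (1 - c ^ k) / (1 - u) := by
    rw [htop, hbot, geom_sum_eq hc1', geom_sum_eq hc1']
    have h5 : c - 1 ≠ 0 := by intro h; apply hc1'; linarith
    have h6 : (1:ℝ) - u ≠ 0 := by intro h; nlinarith
    have h7 : c ^ d - 1 ≠ 0 := by intro h; apply h6; rw [hudef]; linarith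
    field_simp
    ring
  have hdR : ((d:ℝ)) ≠ 0 := by positivity
  have hck : c ^ k = u ^ ((k:ℝ) / (d:ℝ)) := by
    rw [hudef, ← Real.rpow_natCast c d, ← Real.rpow_natCast c k,
      ← Real.rpow_mul hc0.le]
    congr 1
    field_simp
  have hexp : ((n : ℝ) - m') / ((m' : ℝ) - m) = (k:ℝ) / (d:ℝ) := by
    rw [hkdef, hddef]
    rw [Nat.cast_sub (by omega : m' ≤ n), Nat.cast_sub (by omega : m ≤ m')]
  have hr : (0:ℝ) < (k:ℝ) / (d:ℝ) := by positivity
  rw [hLHS, hexp, hck]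
  have := mono_f ((k:ℝ)/(d:ℝ)) hr u t hu0 hut ht
  calc u * (1 - u ^ ((k:ℝ)/(d:ℝ))) / (1 - u)
      ≤ t * (1 - t ^ ((k:ℝ)/(d:ℝ))) / (1 - t) := this
    _ = t / (1 - t) * (1 - t ^ ((k:ℝ)/(d:ℝ))) := by ring
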